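/- Let 𝐓 be a set of α-tangles in a parity game, let A ⊆ V, and let Z = TAttr_α^𝐓(A) be the tangle attractor of A for player α. Then player α has a strategy σ defined on the α-vertices of Z ∖ A such that every play consistent with σ that starts in Z either visits a vertex of A, or remains in Z forever and is won by player α. -/

import Mathlib

open scoped Classical

/-- A parity game on a finite vertex type `V`.  Player `false` is Even and
player `true` is Odd; `owner v` is the player controlling vertex `v`,
`edge` is the (left-total) move relation and `pr` assigns priorities. -/
structure ParityGame (V : Type) [Fintype V] where
  owner : V → Bool
  edge : V → V → Prop
  total : ∀ v, ∃ w, edge v w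
  pr : V → ℕ

namespace ParityGame

variable {V : Type} [Fintype V] (G : ParityGame V)

/-- The player whose parity matches the priority `p` (`false` = Even, `true` = Odd). -/
def playerOf (p : ℕ) : Bool := decide (p % 2 = 1)

/-- A play is an infinite sequence of vertices consistent with the edge relation. -/
def IsPlay (π : ℕ → V) : Prop := ∀ i, G.edge (π i) (π (i + 1))

/-- The set of vertices occurring infinitely often in `π`. -/
def infOcc (π : ℕ → V) : Set V := {v | ∀ n : ℕ, ∃ m, n ≤ m ∧ π m = v}

/-- The highest priority of a vertex in `S`. -/
noncomputable def maxPr (S : Set V) : ℕ := sSup (G.pr '' S)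

/-- Player `α` wins the play `π` iff the highest priority occurring infinitely
often in `π` has `α`'s parity. -/
def Wins (α : Bool) (π : ℕ → V) : Prop := playerOf (G.maxPr (infOcc π)) = α

/-- A (positional, partial) strategy for player `α`. -/
def IsStrategy (α : Bool) (σ : V → Option V) : Prop :=
  ∀ v w, σ v = some w → G.owner v = α ∧ G.edge v w

/-- A play is consistent with the strategy `σ`. -/
def Consistent (σ : V → Option V) (π : ℕ → V) : Prop :=
  ∀ i w, σ (π i) = some w → π (i + 1) = w

/-- All plays starting in `U` that are consistent with `σ`. -/
def PlaysFrom (U : Set V) (σ : V → Option V) : Set (ℕ → V) :=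
  {π | G.IsPlay π ∧ π 0 ∈ U ∧ Consistent σ π}

/-- `U` is closed with respect to player `α`: every `α`-vertex of `U` has a
successor in `U` and every opponent vertex of `U` has all successors in `U`. -/
def ClosedFor (α : Bool) (U : Set V) : Prop :=
  (∀ v ∈ U, G.owner v = α → ∃ w ∈ U, G.edge v w) ∧
  (∀ v ∈ U, G.owner v ≠ α → ∀ w, G.edge v w → w ∈ U)

/-- `D` is an `α`-dominion with (winning) strategy `σ`: `D` is closed for `α`,
`σ` is a strategy of `α` defined on all `α`-vertices of `D` with values in `D`,
and `α` wins every consistent play from `D`. -/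
def IsDominionWith (α : Bool) (D : Set V) (σ : V → Option V) : Prop :=
  G.ClosedFor α D ∧ G.IsStrategy α σ ∧
  (∀ v ∈ D, G.owner v = α → ∃ w ∈ D, σ v = some w) ∧
  ∀ π ∈ G.PlaysFrom D σ, G.Wins α π

/-- `D` is an `α`-dominion. -/
def IsDominion (α : Bool) (D : Set V) : Prop := ∃ σ, G.IsDominionWith α D σ

/-- The value of a play: the highest priority occurring infinitely often. -/
noncomputable def playValue (π : ℕ → V) : ℕ := G.maxPr (infOcc π)

/-- `D` is a `p`-dominion with winning strategy `σ`: a dominion such that `p` is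
the maximum, over all consistent plays from `D`, of the highest priority seen
infinitely often. -/
def IsPDominionWith (α : Bool) (p : ℕ) (D : Set V) (σ : V → Option V) : Prop :=
  G.IsDominionWith α D σ ∧ IsGreatest (G.playValue '' G.PlaysFrom D σ) p

/-- `D` is a `p`-dominion for player `α`. -/
def IsPDominion (α : Bool) (p : ℕ) (D : Set V) : Prop := ∃ σ, G.IsPDominionWith α p D σ

/-- The edges of the subgame `G[U,σ]` induced by `U` and the strategy `σ`. -/
def subEdge (U : Set V) (σ : V → Option V) (u v : V) : Prop :=
  u ∈ U ∧ v ∈ U ∧ G.edge u v ∧ (σ u = none ∨ σ u = some v)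

/-- `G[U,σ]` is strongly connected. -/
def StronglyConnected (U : Set V) (σ : V → Option V) : Prop :=
  ∀ u ∈ U, ∀ v ∈ U, Relation.ReflTransGen (G.subEdge U σ) u v

/-- A cycle of `G[U,σ]`: from `v` through the list `l` back to `v`. -/
def IsCycle (U : Set V) (σ : V → Option V) (v : V) (l : List V) : Prop :=
  List.Chain (G.subEdge U σ) v (l ++ [v])

/-- Player `α` wins all cycles of `G[U,σ]`: the maximum priority on every cycle
has `α`'s parity. -/
def WinsAllCycles (α : Bool) (U : Set V) (σ : V → Option V) : Prop :=
  ∀ v l, G.IsCycle U σ v l → playerOf (G.maxPr {x | x ∈ v :: l}) = α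

/-- `(U, σ)` is a tangle: `U` is nonempty, `σ` is a strategy for the player `α`
of the parity of the highest priority of `U`, defined exactly on the
`α`-vertices of `U` with values in `U`, the subgame `G[U,σ]` is strongly
connected, and player `α` wins all cycles of `G[U,σ]`. -/
def IsTangle (U : Set V) (σ : V → Option V) : Prop :=
  U.Nonempty ∧
  (∀ v w, σ v = some w → v ∈ U ∧ w ∈ U ∧ G.owner v = playerOf (G.maxPr U) ∧ G.edge v w) ∧
  (∀ v ∈ U, G.owner v = playerOf (G.maxPr U) → (σ v).isSome) ∧
  G.StronglyConnected U σ ∧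
  G.WinsAllCycles (playerOf (G.maxPr U)) U σ

/-- The escapes `E_T(T)` of a tangle with vertex set `U`: the successors outside
`U` of the opponent's vertices in `U`. -/
def escapes (U : Set V) : Set V :=
  {v | v ∉ U ∧ ∃ u ∈ U, G.owner u ≠ playerOf (G.maxPr U) ∧ G.edge u v}

/-- The restriction of a strategy to a set `U`. -/
noncomputable def restrict (σ : V → Option V) (U : Set V) : V → Option V :=
  fun v => if v ∈ U then σ v else none

/-- The attractor of `A` for player `α`: the least fixpoint of
`Z := A ∪ {v ∈ V_α | E(v) ∩ Z ≠ ∅} ∪ {v ∈ V_ᾱ | E(v) ⊆ Z}`. -/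
inductive Attr (α : Bool) (A : Set V) : V → Prop
  | base : ∀ v, v ∈ A → Attr α A v
  | step : ∀ v w, G.owner v = α → G.edge v w → Attr α A w → Attr α A v
  | forced : ∀ v, G.owner v ≠ α → (∀ w, G.edge v w → Attr α A w) → Attr α A v

/-- The attractor of `A` for player `α`, as a set. -/
def attrSet (α : Bool) (A : Set V) : Set V := {v | G.Attr α A v}

/-- The tangle attractor of `A` for player `α` with tangle set `TT`: the least
fixpoint additionally attracting all vertices of `α`-tangles of `TT` whose
escapes all lie in the attracting set. -/
inductive TAttr (α : Bool) (TT : Set (Set V × (V → Option V))) (A : Set V) : V → Prop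
  | base : ∀ v, v ∈ A → TAttr α TT A v
  | step : ∀ v w, G.owner v = α → G.edge v w → TAttr α TT A w → TAttr α TT A v
  | forced : ∀ v, G.owner v ≠ α → (∀ w, G.edge v w → TAttr α TT A w) → TAttr α TT A v
  | tangle : ∀ (U : Set V) (τ : V → Option V) (v : V), (U, τ) ∈ TT →
      G.IsTangle U τ → playerOf (G.maxPr U) = α →
      (∀ w ∈ G.escapes U, TAttr α TT A w) → v ∈ U → TAttr α TT A v

/-- The tangle attractor of `A` for player `α`, as a set. -/
def tattrSet (α : Bool) (TT : Set (Set V × (V → Option V))) (A : Set V) : Set V :=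
  {v | G.TAttr α TT A v}

end ParityGame

namespace ParityGame

variable {V : Type} [Fintype V]

lemma chain_of_play {R : V → V → Prop} (π : ℕ → V) :
    ∀ (m i : ℕ), (∀ t, i ≤ t → R (π t) (π (t + 1))) →
      List.Chain R (π i) ((List.range' (i + 1) m).map π)
  | 0, i, _ => by simp; exact List.Chain.nil
  | m + 1, i, h => by
      rw [List.range'_succ, List.map_cons]
      exact List.Chain.cons (h i le_rfl)
        (chain_of_play π m (i + 1) (fun t ht => h t (by omega)))

lemma exists_eventually_const (f : ℕ → ℕ) (hf : ∀ i, f (i + 1) ≤ f i) :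
    ∃ k, ∀ i, k ≤ i → f i = f k := by
  have hmono : ∀ i j, i ≤ j → f j ≤ f i := by
    intro i j h
    induction h with
    | refl => exact le_rfl
    | step _ ih => exact le_trans (hf _) ih
  obtain ⟨k, hk⟩ := Nat.sInf_mem (Set.range_nonempty f)
  exact ⟨k, fun i hi => le_antisymm (hmono k i hi) (by rw [hk]; exact Nat.sInf_le ⟨i, rfl⟩)⟩

/-- The auxiliary invariant for building the tangle-attractor strategy. -/
def Inv (G : ParityGame V) (α : Bool) (TT : Set (Set V × (V → Option V))) (A Z : Set V)
    (σ : V → Option V) (r : V → ℕ) (T : V → Option (Set V × (V → Option V))) : Prop :=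
  A ⊆ Z ∧ Z ⊆ G.tattrSet α TT A ∧ G.IsStrategy α σ ∧
  ∀ v ∈ Z, v ∉ A →
    (G.owner v = α ∧ ∃ w, σ v = some w ∧ w ∈ Z ∧ r w < r v) ∨
    (G.owner v ≠ α ∧ ∀ w, G.edge v w → w ∈ Z ∧ r w < r v) ∨
    (∃ U τ, T v = some (U, τ) ∧ G.IsTangle U τ ∧ playerOf (G.maxPr U) = α ∧
      v ∈ U ∧ U ⊆ Z ∧ (∀ w ∈ G.escapes U, w ∈ Z ∧ r w < r v) ∧
      (∀ u ∈ U, r u ≤ r v) ∧ (∀ u ∈ U, r u = r v → T u = some (U, τ)) ∧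
      (G.owner v = α → σ v = τ v))

lemma inv_extend {G : ParityGame V} {α : Bool} {TT : Set (Set V × (V → Option V))}
    {A Z : Set V} {σ : V → Option V} {r : V → ℕ} {T : V → Option (Set V × (V → Option V))}
    (h : Inv G α TT A Z σ r T) (W : Set V)
    (σn : V → Option V) (Tn : V → Option (Set V × (V → Option V)))
    (hdisj : ∀ x ∈ W, x ∉ Z)
    (hWt : ∀ x ∈ W, x ∈ G.tattrSet α TT A)
    (hstrat : ∀ x ∈ W, ∀ y, σn x = some y → G.owner x = α ∧ G.edge x y)
    (hcase : ∀ x ∈ W,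
      (G.owner x = α ∧ ∃ w, σn x = some w ∧ w ∈ Z) ∨
      (G.owner x ≠ α ∧ ∀ w, G.edge x w → w ∈ Z) ∨
      (∃ U τ, Tn x = some (U, τ) ∧ G.IsTangle U τ ∧ playerOf (G.maxPr U) = α ∧
        x ∈ U ∧ U ⊆ Z ∪ W ∧ (∀ w ∈ G.escapes U, w ∈ Z) ∧
        (∀ u ∈ U, u ∉ Z → u ∈ W ∧ Tn u = some (U, τ)) ∧
        (G.owner x = α → σn x = τ x))) :
    Inv G α TT A (Z ∪ W)
      (fun x => if x ∈ W then σn x else σ x)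
      (fun x => if x ∈ W then Finset.univ.sup r + 1 else r x)
      (fun x => if x ∈ W then Tn x else T x) := by
  obtain ⟨h1, h2, h3, h4⟩ := h
  set N := Finset.univ.sup r with hN
  have hrle : ∀ x : V, r x ≤ N := fun x => Finset.le_sup (Finset.mem_univ x)
  have hnW : ∀ x ∈ Z, x ∉ W := fun x hx hxW => hdisj x hxW hx
  refine ⟨fun x hx => Or.inl (h1 hx), ?_, ?_, ?_⟩
  · rintro x (hx | hx)
    · exact h2 hx
    · exact hWt x hx
  · intro v w hvw
    by_cases hv : v ∈ W
    · simp only [if_pos hv] at hvw; exact hstrat v hv w hvw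
    · simp only [if_neg hv] at hvw; exact h3 v w hvw
  · rintro x (hx | hx) hxA
    · -- old vertex
      have hxW : x ∉ W := hnW x hx
      rcases h4 x hx hxA with ⟨ho, w, hs, hwZ, hr⟩ | ⟨ho, hall⟩ |
        ⟨U, τ, hT, htg, hpl, hxU, hUZ, hesc, hle, heq, hστ⟩
      · exact Or.inl ⟨ho, w, by simp only [if_neg hxW]; exact hs, Or.inl hwZ,
          by simp only [if_neg (hnW w hwZ), if_neg hxW]; exact hr⟩
      · refine Or.inr (Or.inl ⟨ho, fun y hy => ⟨Or.inl (hall y hy).1, ?_⟩⟩)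
        simp only [if_neg (hnW y (hall y hy).1), if_neg hxW]; exact (hall y hy).2
      · refine Or.inr (Or.inr ⟨U, τ, by simp only [if_neg hxW]; exact hT, htg, hpl, hxU,
          fun u hu => Or.inl (hUZ hu), ?_, ?_, ?_, ?_⟩)
        · intro y hy
          exact ⟨Or.inl (hesc y hy).1,
            by simp only [if_neg (hnW y (hesc y hy).1), if_neg hxW]; exact (hesc y hy).2⟩
        · intro u hu
          simp only [if_neg (hnW u (hUZ hu)), if_neg hxW]; exact hle u hu
        · intro u hu hru
          simp only [if_neg (hnW u (hUZ hu)), if_neg hxW] at hru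
          simp only [if_neg (hnW u (hUZ hu))]; exact heq u hu hru
        · intro ho; simp only [if_neg hxW]; exact hστ ho
    · -- new vertex
      rcases hcase x hx with ⟨ho, w, hs, hwZ⟩ | ⟨ho, hall⟩ |
        ⟨U, τ, hT, htg, hpl, hxU, hUZW, hesc, hnew, hστ⟩
      · refine Or.inl ⟨ho, w, by simp only [if_pos hx]; exact hs, Or.inl hwZ, ?_⟩
        simp only [if_neg (hnW w hwZ), if_pos hx]
        exact Nat.lt_succ_of_le (hrle w)
      · refine Or.inr (Or.inl ⟨ho, fun y hy => ⟨Or.inl (hall y hy), ?_⟩⟩)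
        simp only [if_neg (hnW y (hall y hy)), if_pos hx]
        exact Nat.lt_succ_of_le (hrle y)
      · refine Or.inr (Or.inr ⟨U, τ, by simp only [if_pos hx]; exact hT, htg, hpl, hxU, hUZW,
          ?_, ?_, ?_, ?_⟩)
        · intro y hy
          refine ⟨Or.inl (hesc y hy), ?_⟩
          simp only [if_neg (hnW y (hesc y hy)), if_pos hx]
          exact Nat.lt_succ_of_le (hrle y)
        · intro u hu
          simp only [if_pos hx]
          by_cases huW : u ∈ W
          · simp only [if_pos huW]; exact le_rfl
          · simp only [if_neg huW]; exact le_trans (hrle u) (Nat.le_succ N)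
        · intro u hu hru
          simp only [if_pos hx] at hru
          by_cases huW : u ∈ W
          · simp only [if_pos huW]
            exact (hnew u hu (hdisj u huW)).2
          · simp only [if_neg huW] at hru
            exact absurd hru (by have := hrle u; omega)
        · intro ho; simp only [if_pos hx, if_pos hx]; exact hστ ho


lemma inv_play {G : ParityGame V} {α : Bool} {TT : Set (Set V × (V → Option V))}
    {A Z : Set V} {σ : V → Option V} {r : V → ℕ} {T : V → Option (Set V × (V → Option V))}
    (h : Inv G α TT A Z σ r T) (π : ℕ → V) (hplay : G.IsPlay π) (hcons : Consistent σ π)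
    (h0 : π 0 ∈ Z) (hA : ∀ i, π i ∉ A) :
    (∀ i, π i ∈ Z) ∧ G.Wins α π := by
  classical
  obtain ⟨h1, h2, h3, h4⟩ := h
  -- one-step analysis
  have key : ∀ i, π i ∈ Z → π (i + 1) ∈ Z ∧ r (π (i + 1)) ≤ r (π i) ∧
      (r (π (i + 1)) = r (π i) → ∃ U τ, T (π i) = some (U, τ) ∧ T (π (i + 1)) = some (U, τ) ∧
        G.IsTangle U τ ∧ playerOf (G.maxPr U) = α ∧ G.subEdge U τ (π i) (π (i + 1))) := by
    intro i hi
    rcases h4 (π i) hi (hA i) with ⟨hown, w, hσ, hwZ, hlt⟩ | ⟨hown, hall⟩ |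
      ⟨U, τ, hT, htg, hpl, hvU, hUZ, hesc, hle, heqT, hστ⟩
    · have hnext : π (i + 1) = w := hcons i w hσ
      rw [hnext]
      exact ⟨hwZ, le_of_lt hlt, fun heq => absurd heq (by omega)⟩
    · obtain ⟨hwZ, hlt⟩ := hall (π (i + 1)) (hplay i)
      exact ⟨hwZ, le_of_lt hlt, fun heq => absurd heq (by omega)⟩
    · by_cases hown : G.owner (π i) = α
      · have hplv : G.owner (π i) = playerOf (G.maxPr U) := by rw [hown, hpl]
        have hsome := htg.2.2.1 (π i) hvU hplv
        obtain ⟨w, hw⟩ := Option.isSome_iff_exists.mp hsome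
        have hwU : w ∈ U := (htg.2.1 (π i) w hw).2.1
        have hnext : π (i + 1) = w := hcons i w (by rw [hστ hown]; exact hw)
        refine ⟨hUZ (hnext ▸ hwU), hnext ▸ hle w hwU, fun heq => ?_⟩
        refine ⟨U, τ, hT, heqT _ (hnext ▸ hwU) heq, htg, hpl,
          hvU, hnext ▸ hwU, hplay i, Or.inr ?_⟩
        rw [hnext]
        exact hw
      · by_cases hmem : π (i + 1) ∈ U
        · refine ⟨hUZ hmem, hle _ hmem, fun heq =>
            ⟨U, τ, hT, heqT _ hmem heq, htg, hpl, hvU, hmem, hplay i, Or.inl ?_⟩⟩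
          cases hτ : τ (π i) with
          | none => rfl
          | some w =>
              exact absurd (htg.2.1 _ _ hτ).2.2.1 (by rw [hpl]; exact hown)
        · have hesc' : π (i + 1) ∈ G.escapes U :=
            ⟨hmem, π i, hvU, by rw [hpl]; exact hown, hplay i⟩
          obtain ⟨hz, hlt⟩ := hesc _ hesc'
          exact ⟨hz, le_of_lt hlt, fun heq => absurd heq (by omega)⟩
  have hzall : ∀ i, π i ∈ Z := by
    intro i
    induction i with
    | zero => exact h0
    | succ n ih => exact (key n ih).1
  refine ⟨hzall, ?_⟩
  -- rank is eventually constant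
  obtain ⟨k, hk⟩ := exists_eventually_const (fun i => r (π i)) (fun i => (key i (hzall i)).2.1)
  have req : ∀ i, k ≤ i → r (π (i + 1)) = r (π i) := by
    intro i hi
    have e1 := hk (i + 1) (le_trans hi (Nat.le_succ i))
    have e2 := hk i hi
    omega
  obtain ⟨U, τ, hTk, _, htg, hpl, _⟩ := (key k (hzall k)).2.2 (req k le_rfl)
  have hfix : ∀ i, k ≤ i → T (π i) = some (U, τ) := by
    intro i hi
    induction hi with
    | refl => exact hTk
    | @step i hik ih =>
        obtain ⟨U', τ', hT1, hT2, _, _, _⟩ := (key i (hzall i)).2.2 (req i hik)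
        rw [hT1] at ih
        obtain ⟨e1, e2⟩ := Prod.mk.injEq .. ▸ Option.some_inj.mp ih
        rw [e1, e2] at hT2
        exact hT2
  have hsub : ∀ i, k ≤ i → G.subEdge U τ (π i) (π (i + 1)) := by
    intro i hi
    obtain ⟨U', τ', hT1, _, _, _, hse⟩ := (key i (hzall i)).2.2 (req i hi)
    have := hfix i hi
    rw [hT1] at this
    obtain ⟨e1, e2⟩ := Prod.mk.injEq .. ▸ Option.some_inj.mp this
    rw [← e1, ← e2]
    exact hse
  -- eventually only infinitely-occurring vertices
  have hinf : ∀ v : V, ∃ n : ℕ, v ∉ infOcc π → ∀ m, n ≤ m → π m ≠ v := by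
    intro v
    by_cases hv : v ∈ infOcc π
    · exact ⟨0, fun hc => absurd hv hc⟩
    · have hv' : ¬ ∀ n : ℕ, ∃ m, n ≤ m ∧ π m = v := hv
      push_neg at hv'
      obtain ⟨n, hn⟩ := hv'
      exact ⟨n, fun _ m hm => hn m hm⟩
  choose Nf hNf using hinf
  set k' : ℕ := max k (Finset.univ.sup Nf) with hk'def
  have hIall : ∀ i, k' ≤ i → π i ∈ infOcc π := by
    intro i hi
    by_contra hc
    exact hNf (π i) hc i
      (le_trans (le_trans (Finset.le_sup (Finset.mem_univ (π i))) (le_max_right _ _)) hi) rfl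
  have hkk' : k ≤ k' := le_max_left _ _
  -- the maximum infinitely-occurring priority is attained
  have hne : (G.pr '' infOcc π).Nonempty := ⟨G.pr (π k'), π k', hIall k' le_rfl, rfl⟩
  obtain ⟨vstar, hvI, hvpr⟩ := hne.csSup_mem (Set.toFinite _)
  have hmaxI : G.maxPr (infOcc π) = G.pr vstar := by
    rw [maxPr]; exact hvpr.symm
  have hle_max : ∀ x ∈ infOcc π, G.pr x ≤ G.pr vstar := by
    intro x hx
    rw [hvpr]
    exact le_csSup (Set.toFinite _).bddAbove ⟨x, hx, rfl⟩
  -- find a cycle through vstar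
  obtain ⟨i0, hi0, hi0v⟩ := hvI k'
  obtain ⟨j, hj, hjv⟩ := hvI (i0 + 1)
  set l : List V := (List.range' (i0 + 1) (j - (i0 + 1))).map π with hldef
  have hchain : List.Chain (G.subEdge U τ) (π i0) ((List.range' (i0 + 1) (j - i0)).map π) :=
    chain_of_play π (j - i0) i0 (fun t ht => hsub t (le_trans hkk' (le_trans hi0 ht)))
  have hconcat : (List.range' (i0 + 1) (j - i0)).map π = l ++ [π j] := by
    have hn : j - i0 = (j - (i0 + 1)) + 1 := by omega
    have hj' : (i0 + 1) + 1 * (j - (i0 + 1)) = j := by omega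
    rw [hn, List.range'_concat, hj', List.map_append, List.map_singleton, hldef]
  have hcyc : G.IsCycle U τ vstar l := by
    have hc : List.Chain (G.subEdge U τ) (π i0) (l ++ [π j]) := hconcat ▸ hchain
    rw [hi0v, hjv] at hc
    exact hc
  have hwac := htg.2.2.2.2 vstar l hcyc
  -- the maximum priority on the cycle is pr vstar
  have hcycI : ∀ x ∈ vstar :: l, x ∈ infOcc π := by
    intro x hx
    rcases List.mem_cons.mp hx with hx | hx
    · rw [hx]; exact hvI
    · rw [hldef] at hx
      obtain ⟨t, ht, rfl⟩ := List.mem_map.mp hx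
      have := (List.mem_range'_1.mp ht).1
      exact hIall t (by omega)
  have hcmax : G.maxPr {x | x ∈ vstar :: l} = G.pr vstar := by
    rw [maxPr]
    apply le_antisymm
    · refine csSup_le ⟨G.pr vstar, vstar, List.mem_cons_self, rfl⟩ ?_
      rintro p ⟨x, hx, rfl⟩
      exact hle_max x (hcycI x hx)
    · exact le_csSup (Set.toFinite _).bddAbove ⟨vstar, List.mem_cons_self, rfl⟩
  show playerOf (G.maxPr (infOcc π)) = α
  rw [hmaxI, ← hcmax]
  exact hwac.trans hpl

/-- player `α` has a strategy on the tangle attractor `Z` of `A`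
such that every consistent play starting in `Z` either visits `A`, or remains
in `Z` forever and is won by `α`. -/
theorem tangle_attractor_strategy (G : ParityGame V) (α : Bool)
    (TT : Set (Set V × (V → Option V)))
    (hTT : ∀ T ∈ TT, G.IsTangle T.1 T.2 ∧ playerOf (G.maxPr T.1) = α)
    (A : Set V) :
    ∃ σ : V → Option V, G.IsStrategy α σ ∧
      (∀ v, v ∈ G.tattrSet α TT A \ A → G.owner v = α → (σ v).isSome) ∧
      ∀ π : ℕ → V, G.IsPlay π → Consistent σ π → π 0 ∈ G.tattrSet α TT A →
        (∃ i, π i ∈ A) ∨ ((∀ i, π i ∈ G.tattrSet α TT A) ∧ G.Wins α π) := by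
  classical
  set S : Set (Set V) := {Z | ∃ σ r T, Inv G α TT A Z σ r T} with hSdef
  have hAS : A ∈ S := by
    refine ⟨fun _ => none, fun _ => 0, fun _ => none, subset_rfl,
      fun v hv => TAttr.base v hv, fun v w hvw => by simp at hvw,
      fun v hv hvA => absurd hv hvA⟩
  have hbd : ∀ Z ∈ S, Z.ncard ≤ Fintype.card V := by
    intro Z _
    simpa [Set.ncard_univ, Nat.card_eq_fintype_card] using
      Set.ncard_le_ncard (Set.subset_univ Z) (Set.toFinite _)
  have hMne : (Set.ncard '' S).Nonempty := ⟨A.ncard, A, hAS, rfl⟩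
  have hMbd : BddAbove (Set.ncard '' S) := by
    refine ⟨Fintype.card V, ?_⟩
    rintro n ⟨Z, hZ, rfl⟩
    exact hbd Z hZ
  obtain ⟨Z, hZS, hZcard⟩ := Nat.sSup_mem hMne hMbd
  have hmax : ∀ Z' ∈ S, ¬ Z ⊂ Z' := by
    intro Z' hZ' hss
    have hlt : Z.ncard < Z'.ncard := Set.ncard_lt_ncard hss (Set.toFinite _)
    have hle : Z'.ncard ≤ sSup (Set.ncard '' S) := le_csSup hMbd ⟨Z', hZ', rfl⟩
    omega
  obtain ⟨σ, r, T, hInv⟩ := hZS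
  -- the maximal invariant set contains the tangle attractor
  have hclosed : ∀ v, G.TAttr α TT A v → v ∈ Z := by
    intro v hv
    induction hv with
    | base v hvA => exact hInv.1 hvA
    | step v w hown he hw ihw =>
        by_contra hvZ
        have hdisj : ∀ x ∈ ({v} : Set V), x ∉ Z := by
          rintro x hx
          rw [Set.mem_singleton_iff] at hx
          rw [hx]; exact hvZ
        have hext := inv_extend hInv {v} (fun _ => some w) T hdisj
          (by rintro x hx
              rw [Set.mem_singleton_iff] at hx
              rw [hx]; exact TAttr.step v w hown he hw)
          (by rintro x hx y hy
              rw [Set.mem_singleton_iff] at hx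
              rw [hx]
              rw [Option.some_inj] at hy
              rw [← hy]; exact ⟨hown, he⟩)
          (by rintro x hx
              rw [Set.mem_singleton_iff] at hx
              rw [hx]
              exact Or.inl ⟨hown, w, rfl, ihw⟩)
        exact hmax _ ⟨_, _, _, hext⟩
          ((Set.ssubset_iff_of_subset Set.subset_union_left).2
            ⟨v, Or.inr rfl, hvZ⟩)
    | forced v hown hall ih =>
        by_contra hvZ
        have hdisj : ∀ x ∈ ({v} : Set V), x ∉ Z := by
          rintro x hx
          rw [Set.mem_singleton_iff] at hx
          rw [hx]; exact hvZ
        have hext := inv_extend hInv {v} (fun _ => none) T hdisj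
          (by rintro x hx
              rw [Set.mem_singleton_iff] at hx
              rw [hx]; exact TAttr.forced v hown hall)
          (fun x _ y hy => by simp at hy)
          (by rintro x hx
              rw [Set.mem_singleton_iff] at hx
              rw [hx]
              exact Or.inr (Or.inl ⟨hown, fun w hw => ih w hw⟩))
        exact hmax _ ⟨_, _, _, hext⟩
          ((Set.ssubset_iff_of_subset Set.subset_union_left).2
            ⟨v, Or.inr rfl, hvZ⟩)
    | tangle U τ v hmem htg hpl hesc hvU ih =>
        by_cases hvZ : v ∈ Z
        · exact hvZ
        · exfalso
          have hext := inv_extend hInv (U \ Z) τ (fun _ => some (U, τ))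
            (fun x hx => hx.2)
            (fun x hx => TAttr.tangle U τ x hmem htg hpl hesc hx.1)
            (by intro x _ y hy
                obtain ⟨_, _, ho, he⟩ := htg.2.1 x y hy
                exact ⟨by rw [ho, hpl], he⟩)
            (by intro x hx
                refine Or.inr (Or.inr ⟨U, τ, rfl, htg, hpl, hx.1, ?_, ih, ?_, fun _ => rfl⟩)
                · intro u hu
                  by_cases huZ : u ∈ Z
                  · exact Or.inl huZ
                  · exact Or.inr ⟨hu, huZ⟩
                · intro u hu huZ
                  exact ⟨⟨hu, huZ⟩, rfl⟩)
          exact hmax _ ⟨_, _, _, hext⟩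
            ((Set.ssubset_iff_of_subset Set.subset_union_left).2
              ⟨v, Or.inr ⟨hvU, hvZ⟩, hvZ⟩)
  have hZeq : Z = G.tattrSet α TT A := Set.Subset.antisymm hInv.2.1 (fun x hx => hclosed x hx)
  refine ⟨σ, hInv.2.2.1, ?_, ?_⟩
  · rintro v ⟨hvZ', hvA⟩ hown
    have hvZ : v ∈ Z := by rw [hZeq]; exact hvZ'
    rcases hInv.2.2.2 v hvZ hvA with ⟨_, w, hσ, _⟩ | ⟨hne, _⟩ |
      ⟨U, τ, _, htg, hpl, hvU, _, _, _, _, hστ⟩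
    · rw [hσ]; rfl
    · exact absurd hown hne
    · rw [hστ hown]
      exact htg.2.2.1 v hvU (by rw [hown, hpl])
  · intro π hp hc h0
    by_cases hA : ∃ i, π i ∈ A
    · exact Or.inl hA
    · push_neg at hA
      obtain ⟨hall, hw⟩ := inv_play hInv π hp hc (by rw [hZeq]; exact h0) hA
      refine Or.inr ⟨fun i => ?_, hw⟩
      rw [← hZeq]
      exact hall i

end ParityGame
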